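/- arXiv:2402.06626 — 2 statements merged into one kernel-verified Lean document; each statement's English description precedes it below -/
import Mathlib

section
/- In the two-player game with A = {Top, Bottom}, B = {Left, Right} and payoffs (u1, u2): (Top,Left) = (3, 0), (Top,Right) = (1, 1), (Bottom,Left) = (2, 1), (Bottom,Right) = (0, 0): the unique Nash equilibrium is the pure profile (Top, Right), in which the leader's utility is 1, whereas the leader's value of the pure commitment (Bottom, 0) with zero payments is 2. Hence the leader's optimal value over pure commitments with payments strictly exceeds her utility in every Nash equilibrium of the base game. -/
open Finset

noncomputable section

/-- A probability distribution on a finite type, given as a weight function. -/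
def IsDist {X : Type*} [Fintype X] (σ : X → ℝ) : Prop :=
  (∀ x, 0 ≤ σ x) ∧ ∑ x, σ x = 1

/-- The point mass at `x0`. -/
def delta {X : Type*} [DecidableEq X] (x0 : X) : X → ℝ :=
  fun x => if x = x0 then 1 else 0

/-- Follower's induced utility under commitment `(σ, P)` when playing `b`. -/
def folU {A B : Type*} [Fintype A] (u2 : A → B → ℝ) (σ : A → ℝ) (P : A → B → ℝ) (b : B) : ℝ :=
  ∑ a, σ a * (u2 a b + P a b)

/-- Leader's utility under commitment `(σ, P)` when the follower plays `b`. -/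
def leadU {A B : Type*} [Fintype A] (u1 : A → B → ℝ) (σ : A → ℝ) (P : A → B → ℝ) (b : B) : ℝ :=
  ∑ a, σ a * (u1 a b - P a b)

/-- The leader's value of the commitment `(σ, P)`: the follower plays an action maximizing
his induced utility, tiebreaking in favor of the leader. -/
def leaderValue {A B : Type*} [Fintype A] [Fintype B] (u1 u2 : A → B → ℝ)
    (σ : A → ℝ) (P : A → B → ℝ) : ℝ :=
  sSup {x | ∃ b : B, (∀ b' : B, folU u2 σ P b' ≤ folU u2 σ P b) ∧ x = leadU u1 σ P b}

/-- Nash equilibrium of a finite two-player game. -/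
def NashEq {A B : Type*} [Fintype A] [Fintype B] (u1 u2 : A → B → ℝ)
    (σ1 : A → ℝ) (σ2 : B → ℝ) : Prop :=
  IsDist σ1 ∧ IsDist σ2 ∧
  (∀ a : A, 0 < σ1 a → ∀ a' : A, ∑ b, σ2 b * u1 a' b ≤ ∑ b, σ2 b * u1 a b) ∧
  (∀ b : B, 0 < σ2 b → ∀ b' : B, ∑ a, σ1 a * u2 a b' ≤ ∑ a, σ1 a * u2 a b)

/-- Leader's actions. -/
inductive RA5 | Top | Bottom
  deriving DecidableEq

instance : Fintype RA5 := ⟨{RA5.Top, RA5.Bottom}, fun x => by cases x <;> simp⟩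

/-- Follower's actions. -/
inductive CA5 | Left | Right
  deriving DecidableEq

instance : Fintype CA5 := ⟨{CA5.Left, CA5.Right}, fun x => by cases x <;> simp⟩

/-- Leader's utility. -/
def u1f : RA5 → CA5 → ℝ
  | .Top, .Left => 3
  | .Top, .Right => 1
  | .Bottom, .Left => 2
  | .Bottom, .Right => 0

/-- Follower's utility. -/
def u2f : RA5 → CA5 → ℝ
  | .Top, .Left => 0
  | .Top, .Right => 1
  | .Bottom, .Left => 1
  | .Bottom, .Right => 0

lemma sumRA (f : RA5 → ℝ) : ∑ a, f a = f .Top + f .Bottom := by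
  rw [show (univ : Finset RA5) = {RA5.Top, RA5.Bottom} from by decide]
  rw [Finset.sum_pair (by decide)]

lemma sumCA (f : CA5 → ℝ) : ∑ b, f b = f .Left + f .Right := by
  rw [show (univ : Finset CA5) = {CA5.Left, CA5.Right} from by decide]
  rw [Finset.sum_pair (by decide)]

lemma nash_iff (σ1 : RA5 → ℝ) (σ2 : CA5 → ℝ) :
    NashEq u1f u2f σ1 σ2 ↔ (σ1 = delta RA5.Top ∧ σ2 = delta CA5.Right) := by
  constructor
  · rintro ⟨⟨h1n, h1s⟩, ⟨h2n, h2s⟩, hA, hB⟩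
    rw [sumRA] at h1s
    rw [sumCA] at h2s
    have hBot : σ1 RA5.Bottom = 0 := by
      by_contra h
      have hpos : 0 < σ1 RA5.Bottom := lt_of_le_of_ne (h1n _) (Ne.symm h)
      have := hA RA5.Bottom hpos RA5.Top
      rw [sumCA, sumCA] at this
      simp only [u1f] at this
      linarith [h2n CA5.Left, h2n CA5.Right]
    have hTop : σ1 RA5.Top = 1 := by linarith
    have hLeft : σ2 CA5.Left = 0 := by
      by_contra h
      have hpos : 0 < σ2 CA5.Left := lt_of_le_of_ne (h2n _) (Ne.symm h)
      have := hB CA5.Left hpos CA5.Right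
      rw [sumRA, sumRA] at this
      simp only [u2f] at this
      linarith
    have hRight : σ2 CA5.Right = 1 := by linarith
    constructor
    · funext a; cases a <;> simp [delta, hTop, hBot]
    · funext b; cases b <;> simp [delta, hLeft, hRight]
  · rintro ⟨rfl, rfl⟩
    refine ⟨⟨fun a => ?_, ?_⟩, ⟨fun b => ?_, ?_⟩, fun a ha a' => ?_, fun b hb b' => ?_⟩
    · cases a <;> simp [delta]
    · rw [sumRA]; simp [delta]
    · cases b <;> simp [delta]
    · rw [sumCA]; simp [delta]
    · cases a with
      | Top => rw [sumCA, sumCA]; cases a' <;> simp [delta, u1f]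
      | Bottom => simp [delta] at ha
    · cases b with
      | Right => rw [sumRA, sumRA]; cases b' <;> simp [delta, u2f]
      | Left => simp [delta] at hb

lemma lv_bottom : leaderValue u1f u2f (delta RA5.Bottom) (fun _ _ => 0) = 2 := by
  have hset : {x | ∃ b : CA5, (∀ b' : CA5,
      folU u2f (delta RA5.Bottom) (fun _ _ => 0) b' ≤ folU u2f (delta RA5.Bottom) (fun _ _ => 0) b)
      ∧ x = leadU u1f (delta RA5.Bottom) (fun _ _ => 0) b} = {2} := by
    have hfL : folU u2f (delta RA5.Bottom) (fun _ _ => 0) CA5.Left = 1 := by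
      rw [folU, sumRA]; simp [delta, u2f]
    have hfR : folU u2f (delta RA5.Bottom) (fun _ _ => 0) CA5.Right = 0 := by
      rw [folU, sumRA]; simp [delta, u2f]
    have hlL : leadU u1f (delta RA5.Bottom) (fun _ _ => 0) CA5.Left = 2 := by
      rw [leadU, sumRA]; simp [delta, u1f]
    ext x
    simp only [Set.mem_setOf_eq, Set.mem_singleton_iff]
    constructor
    · rintro ⟨b, hm, rfl⟩
      cases b with
      | Left => exact hlL
      | Right => have := hm CA5.Left; rw [hfL, hfR] at this; linarith
    · rintro rfl
      exact ⟨CA5.Left, fun b' => by cases b' <;> simp [hfL, hfR], hlL.symm⟩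
  rw [leaderValue, hset, csSup_singleton]

lemma lv_le_three (a1 : RA5) (P : RA5 → CA5 → ℝ) (hP : ∀ a b, 0 ≤ P a b) :
    leaderValue u1f u2f (delta a1) P ≤ 3 := by
  apply Real.sSup_le
  · rintro x ⟨b, _, rfl⟩
    have : leadU u1f (delta a1) P b = u1f a1 b - P a1 b := by
      rw [leadU, sumRA]; cases a1 <;> simp [delta]
    rw [this]
    have h1 : u1f a1 b ≤ 3 := by cases a1 <;> cases b <;> simp [u1f] <;> norm_num
    linarith [hP a1 b]
  · norm_num

theorem stmt5 :
    (∀ (σ1 : RA5 → ℝ) (σ2 : CA5 → ℝ),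
        NashEq u1f u2f σ1 σ2 ↔ (σ1 = delta RA5.Top ∧ σ2 = delta CA5.Right))
    ∧ (∑ a, ∑ b, delta RA5.Top a * delta CA5.Right b * u1f a b) = 1
    ∧ leaderValue u1f u2f (delta RA5.Bottom) (fun _ _ => 0) = 2
    ∧ (∀ (σ1 : RA5 → ℝ) (σ2 : CA5 → ℝ), NashEq u1f u2f σ1 σ2 →
        (∑ a, ∑ b, σ1 a * σ2 b * u1f a b)
          < sSup {x | ∃ (a1 : RA5) (P : RA5 → CA5 → ℝ), (∀ a b, 0 ≤ P a b) ∧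
              x = leaderValue u1f u2f (delta a1) P}) := by
  refine ⟨nash_iff, ?_, lv_bottom, ?_⟩
  · rw [sumRA, sumCA, sumCA]; simp [delta, u1f]
  · intro σ1 σ2 h
    obtain ⟨rfl, rfl⟩ := (nash_iff σ1 σ2).mp h
    have hval : (∑ a, ∑ b, delta RA5.Top a * delta CA5.Right b * u1f a b) = 1 := by
      rw [sumRA, sumCA, sumCA]; simp [delta, u1f]
    rw [hval]
    have hmem : (2 : ℝ) ∈ {x | ∃ (a1 : RA5) (P : RA5 → CA5 → ℝ), (∀ a b, 0 ≤ P a b) ∧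
        x = leaderValue u1f u2f (delta a1) P} :=
      ⟨RA5.Bottom, fun _ _ => 0, fun _ _ => le_refl 0, lv_bottom.symm⟩
    have hbdd : BddAbove {x | ∃ (a1 : RA5) (P : RA5 → CA5 → ℝ), (∀ a b, 0 ≤ P a b) ∧
        x = leaderValue u1f u2f (delta a1) P} := by
      refine ⟨3, ?_⟩
      rintro x ⟨a1, P, hP, rfl⟩
      exact lv_le_three a1 P hP
    have := le_csSup hbdd hmem
    linarith
end
end

section
/- For every two-player Bayesian game with leader types, the supremum over all commitments (σ, P) — with σ : Θ → Δ(A) and P : A × B → ℝ≥0 — of the leader's value equals max over b ∈ B of the optimal value of the program: maximize Σ_{θ∈Θ} π(θ) Σ_{a∈A} p^θ(a) u1^θ(a,b) − c over families (p^θ)_{θ∈Θ} with each p^θ ∈ Δ(A) and c ≥ 0, subject to Σ_θ π(θ) Σ_a p^θ(a) u2(a,b) + c ≥ Σ_θ π(θ) Σ_a p^θ(a) u2(a,b') for every b' ∈ B. Moreover, both the outer supremum and each inner program's optimum are attained. -/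
open Finset

noncomputable section

/-- Follower's induced utility under commitment `(σ, P)` when playing `b`, in a two-player
Bayesian game with leader types. -/
def bFolU {Θ A B : Type*} [Fintype Θ] [Fintype A]
    (π : Θ → ℝ) (u2 : A → B → ℝ) (σ : Θ → A → ℝ) (P : A → B → ℝ) (b : B) : ℝ :=
  ∑ θ, π θ * ∑ a, σ θ a * (u2 a b + P a b)

/-- Leader's ex-ante utility under commitment `(σ, P)` when the follower plays `b`. -/
def bLeadU {Θ A B : Type*} [Fintype Θ] [Fintype A]
    (π : Θ → ℝ) (u1 : Θ → A → B → ℝ) (σ : Θ → A → ℝ) (P : A → B → ℝ) (b : B) : ℝ :=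
  ∑ θ, π θ * ∑ a, σ θ a * (u1 θ a b - P a b)

/-- The leader's value of the commitment `(σ, P)`: the follower plays an action maximizing
his induced utility, tiebreaking in favor of the leader's ex-ante utility. -/
def bLeaderValue {Θ A B : Type*} [Fintype Θ] [Fintype A] [Fintype B]
    (π : Θ → ℝ) (u1 : Θ → A → B → ℝ) (u2 : A → B → ℝ)
    (σ : Θ → A → ℝ) (P : A → B → ℝ) : ℝ :=
  sSup {x | ∃ b : B, (∀ b' : B, bFolU π u2 σ P b' ≤ bFolU π u2 σ P b) ∧
    x = bLeadU π u1 σ P b}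

/-- The set of leader values achievable by commitments `(σ, P)`. -/
def bCommitVals {Θ A B : Type*} [Fintype Θ] [Fintype A] [Fintype B]
    (π : Θ → ℝ) (u1 : Θ → A → B → ℝ) (u2 : A → B → ℝ) : Set ℝ :=
  {x | ∃ (σ : Θ → A → ℝ) (P : A → B → ℝ), (∀ θ, IsDist (σ θ)) ∧ (∀ a b, 0 ≤ P a b) ∧
    x = bLeaderValue π u1 u2 σ P}

/-- The feasible objective values of the LP for incentivizing the follower action `b`:
maximize `Σ_θ π(θ) Σ_a p^θ(a) u1^θ(a,b) − c` over families `(p^θ)` of distributions on `A`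
and `c ≥ 0`, subject to
`Σ_θ π(θ) Σ_a p^θ(a) u2(a,b) + c ≥ Σ_θ π(θ) Σ_a p^θ(a) u2(a,b')` for every `b'`. -/
def bInnerSet {Θ A B : Type*} [Fintype Θ] [Fintype A]
    (π : Θ → ℝ) (u1 : Θ → A → B → ℝ) (u2 : A → B → ℝ) (b : B) : Set ℝ :=
  {x | ∃ (p : Θ → A → ℝ) (c : ℝ), (∀ θ, IsDist (p θ)) ∧ 0 ≤ c ∧
    (∀ b' : B, (∑ θ, π θ * ∑ a, p θ a * u2 a b')
        ≤ (∑ θ, π θ * ∑ a, p θ a * u2 a b) + c) ∧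
    x = (∑ θ, π θ * ∑ a, p θ a * u1 θ a b) - c}

section Helpers

variable {Θ A B : Type*} [Fintype Θ] [Fintype A] [Fintype B]

lemma sum_split' (π : Θ → ℝ) (p : Θ → A → ℝ) (f g : Θ → A → ℝ) :
    ∑ θ, π θ * ∑ a, p θ a * (f θ a + g θ a)
      = (∑ θ, π θ * ∑ a, p θ a * f θ a) + ∑ θ, π θ * ∑ a, p θ a * g θ a := by
  simp [mul_add, Finset.sum_add_distrib]

lemma sum_split_sub' (π : Θ → ℝ) (p : Θ → A → ℝ) (f g : Θ → A → ℝ) :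
    ∑ θ, π θ * ∑ a, p θ a * (f θ a - g θ a)
      = (∑ θ, π θ * ∑ a, p θ a * f θ a) - ∑ θ, π θ * ∑ a, p θ a * g θ a := by
  simp [mul_sub, Finset.sum_sub_distrib]

lemma sum_const_dist' {π : Θ → ℝ} {p : Θ → A → ℝ} (hπ : IsDist π) (hp : ∀ θ, IsDist (p θ))
    (k : ℝ) : ∑ θ, π θ * ∑ a, p θ a * k = k := by
  have h : ∀ θ, ∑ a, p θ a * k = k := fun θ => by rw [← Finset.sum_mul, (hp θ).2, one_mul]
  simp_rw [h]; rw [← Finset.sum_mul, hπ.2, one_mul]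

lemma sum_nonneg'' {π : Θ → ℝ} {p : Θ → A → ℝ} (hπ : IsDist π) (hp : ∀ θ, IsDist (p θ))
    {g : Θ → A → ℝ} (hg : ∀ θ a, 0 ≤ g θ a) : 0 ≤ ∑ θ, π θ * ∑ a, p θ a * g θ a :=
  Finset.sum_nonneg fun θ _ => mul_nonneg (hπ.1 θ) (Finset.sum_nonneg fun a _ =>
    mul_nonneg ((hp θ).1 a) (hg θ a))

/-- Any leader payoff at a follower best response is feasible for the inner LP at that action. -/
lemma leadU_mem_inner (π : Θ → ℝ) (hπ : IsDist π) (u1 : Θ → A → B → ℝ) (u2 : A → B → ℝ)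
    (σ : Θ → A → ℝ) (P : A → B → ℝ) (hσ : ∀ θ, IsDist (σ θ)) (hP : ∀ a b, 0 ≤ P a b)
    (b : B) (hb : ∀ b' : B, bFolU π u2 σ P b' ≤ bFolU π u2 σ P b) :
    bLeadU π u1 σ P b ∈ bInnerSet π u1 u2 b := by
  refine ⟨σ, ∑ θ, π θ * ∑ a, σ θ a * P a b, hσ, ?_, ?_, ?_⟩
  · exact sum_nonneg'' hπ hσ (fun θ a => hP a b)
  · intro b'
    have h1 := hb b'
    have e : ∀ b'' : B, bFolU π u2 σ P b''
        = (∑ θ, π θ * ∑ a, σ θ a * u2 a b'') + ∑ θ, π θ * ∑ a, σ θ a * P a b'' := by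
      intro b''
      exact sum_split' π σ (fun _ a => u2 a b'') (fun _ a => P a b'')
    have hEP : 0 ≤ ∑ θ, π θ * ∑ a, σ θ a * P a b' := sum_nonneg'' hπ hσ (fun θ a => hP a b')
    rw [e b', e b] at h1
    linarith
  · exact sum_split_sub' π σ (fun θ a => u1 θ a b) (fun _ a => P a b)

lemma inner_exists_greatest [Nonempty A] [Nonempty B]
    (π : Θ → ℝ) (u1 : Θ → A → B → ℝ) (u2 : A → B → ℝ) (b : B) :
    ∃ m, IsGreatest (bInnerSet π u1 u2 b) m := by
  classical
  set K : Set (Θ → A → ℝ) := Set.univ.pi (fun _ => stdSimplex ℝ A) with hK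
  have hKc : IsCompact K := isCompact_univ_pi (fun _ => isCompact_stdSimplex ℝ A)
  have hKne : K.Nonempty :=
    ⟨fun _ => Pi.single (Classical.arbitrary A) 1, fun θ _ =>
      single_mem_stdSimplex ℝ (Classical.arbitrary A)⟩
  have hKmem : ∀ p : Θ → A → ℝ, p ∈ K ↔ ∀ θ, IsDist (p θ) := by
    intro p
    simp only [hK, Set.mem_pi, Set.mem_univ, forall_true_left]
    rfl
  set E2 : (Θ → A → ℝ) → B → ℝ := fun p b' => ∑ θ, π θ * ∑ a, p θ a * u2 a b' with hE2
  set c0 : (Θ → A → ℝ) → ℝ := fun p =>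
    Finset.univ.sup' Finset.univ_nonempty (fun b' => max 0 (E2 p b' - E2 p b)) with hc0
  set g : (Θ → A → ℝ) → ℝ := fun p => (∑ θ, π θ * ∑ a, p θ a * u1 θ a b) - c0 p with hg
  have hE2cont : ∀ b', Continuous (fun p => E2 p b') := by
    intro b'
    apply continuous_finset_sum
    intro θ _
    apply Continuous.mul continuous_const
    apply continuous_finset_sum
    intro a _
    exact (by fun_prop : Continuous fun p : Θ → A → ℝ => p θ a).mul continuous_const
  have hgcont : Continuous g := by
    refine Continuous.sub ?_ ?_
    · apply continuous_finset_sum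
      intro θ _
      apply Continuous.mul continuous_const
      apply continuous_finset_sum
      intro a _
      exact (by fun_prop : Continuous fun p : Θ → A → ℝ => p θ a).mul continuous_const
    · exact Continuous.finset_sup'_apply Finset.univ_nonempty fun b' _ =>
        continuous_const.max ((hE2cont b').sub (hE2cont b))
  obtain ⟨p, hpK, hmax0⟩ := hKc.exists_isMaxOn hKne hgcont.continuousOn
  have hmax : ∀ q ∈ K, g q ≤ g p := fun q hq => hmax0 hq
  have hc0nn : ∀ q, 0 ≤ c0 q := by
    intro q
    have h := Finset.le_sup' (fun b' => max 0 (E2 q b' - E2 q b)) (Finset.mem_univ b)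
    exact le_trans (le_max_left 0 _) h
  refine ⟨g p, ⟨p, c0 p, (hKmem p).1 hpK, hc0nn p, ?_, rfl⟩, ?_⟩
  · intro b'
    have := Finset.le_sup' (fun b' => max 0 (E2 p b' - E2 p b)) (Finset.mem_univ b')
    have h2 := le_trans (le_max_right 0 (E2 p b' - E2 p b)) this
    change E2 p b' - E2 p b ≤ c0 p at h2
    show E2 p b' ≤ E2 p b + c0 p
    linarith
  · rintro x ⟨q, c, hq, hc, hcons, rfl⟩
    have hqK : q ∈ K := (hKmem q).2 hq
    have hle : c0 q ≤ c := by
      refine Finset.sup'_le _ _ fun b' _ => max_le hc ?_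
      have := hcons b'
      change E2 q b' ≤ E2 q b + c at this
      show E2 q b' - E2 q b ≤ c
      linarith
    calc (∑ θ, π θ * ∑ a, q θ a * u1 θ a b) - c ≤ g q := by simp only [hg]; linarith
      _ ≤ g p := hmax q hqK

end Helpers

theorem stmt17 {Θ A B : Type*} [Fintype Θ] [Fintype A] [Fintype B]
    [Nonempty A] [Nonempty B]
    (π : Θ → ℝ) (hπ : IsDist π) (u1 : Θ → A → B → ℝ) (u2 : A → B → ℝ) :
    IsGreatest (bCommitVals π u1 u2)
        (sSup {y | ∃ b : B, y = sSup (bInnerSet π u1 u2 b)})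
    ∧ ∀ b : B, IsGreatest (bInnerSet π u1 u2 b) (sSup (bInnerSet π u1 u2 b)) := by
  classical
  have hInner : ∀ b : B, IsGreatest (bInnerSet π u1 u2 b) (sSup (bInnerSet π u1 u2 b)) := by
    intro b
    obtain ⟨m, hm⟩ := inner_exists_greatest π u1 u2 b
    rw [hm.csSup_eq]
    exact hm
  refine ⟨?_, hInner⟩
  set f : B → ℝ := fun b => sSup (bInnerSet π u1 u2 b) with hf
  obtain ⟨bs, -, hbs⟩ := Finset.exists_max_image Finset.univ f Finset.univ_nonempty
  have hbsmax : ∀ b : B, f b ≤ f bs := fun b => hbs b (Finset.mem_univ b)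
  have houter : IsGreatest {y | ∃ b : B, y = sSup (bInnerSet π u1 u2 b)} (f bs) :=
    ⟨⟨bs, rfl⟩, by rintro y ⟨b, rfl⟩; exact hbsmax b⟩
  rw [houter.csSup_eq]
  -- key claim: any leader value of a commitment is at most `f bs`
  have hub : ∀ (σ : Θ → A → ℝ) (P : A → B → ℝ) (hσ : ∀ θ, IsDist (σ θ))
      (hP : ∀ a b, 0 ≤ P a b) (b : B),
      (∀ b' : B, bFolU π u2 σ P b' ≤ bFolU π u2 σ P b) → bLeadU π u1 σ P b ≤ f bs := by
    intro σ P hσ hP b hb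
    have h1 : bLeadU π u1 σ P b ∈ bInnerSet π u1 u2 b :=
      leadU_mem_inner π hπ u1 u2 σ P hσ hP b hb
    exact le_trans ((hInner b).2 h1) (hbsmax b)
  constructor
  · -- membership: construct an optimal commitment
    obtain ⟨p, c, hp, hc, hcons, hval⟩ := (hInner bs).1
    set P : A → B → ℝ := fun _ b => if b = bs then c else 0 with hPdef
    have hPnn : ∀ a b, 0 ≤ P a b := by
      intro a b
      simp only [hPdef]
      split <;> simp [hc]
    have hfol : ∀ b' : B, bFolU π u2 p P b'
        = (∑ θ, π θ * ∑ a, p θ a * u2 a b') + (if b' = bs then c else 0) := by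
      intro b'
      have := sum_split' π p (fun _ a => u2 a b') (fun _ a => P a b')
      rw [bFolU, this, sum_const_dist' hπ hp]
    have hBR : ∀ b' : B, bFolU π u2 p P b' ≤ bFolU π u2 p P bs := by
      intro b'
      rw [hfol b', hfol bs]
      have e1 : (if bs = bs then c else 0) = c := if_pos rfl
      by_cases h : b' = bs
      · subst h; simp
      · have e2 : (if b' = bs then c else 0) = 0 := if_neg h
        rw [e1, e2]
        have := hcons b'
        linarith
    have hlead : bLeadU π u1 p P bs = f bs := by
      have hsplit := sum_split_sub' π p (fun θ a => u1 θ a bs) (fun _ a => P a bs)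
      have hcbs : ∑ θ, π θ * ∑ a, p θ a * P a bs = c := by
        have : ∀ (θ : Θ) (a : A), p θ a * P a bs = p θ a * c := by
          intro θ a; simp [hPdef]
        simp_rw [this]
        exact sum_const_dist' hπ hp c
      rw [bLeadU, hsplit, hcbs, ← hval]
    have hgreat : IsGreatest {x | ∃ b : B, (∀ b' : B, bFolU π u2 p P b' ≤ bFolU π u2 p P b) ∧
        x = bLeadU π u1 p P b} (f bs) := by
      constructor
      · exact ⟨bs, hBR, hlead.symm⟩
      · rintro x ⟨b, hb, rfl⟩
        exact hub p P hp hPnn b hb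
    exact ⟨p, P, hp, hPnn, by rw [bLeaderValue, hgreat.csSup_eq]⟩
  · -- upper bound
    rintro x ⟨σ, P, hσ, hP, rfl⟩
    rw [bLeaderValue]
    obtain ⟨b0, -, hb0⟩ := Finset.exists_max_image Finset.univ (bFolU π u2 σ P)
      Finset.univ_nonempty
    have hb0' : ∀ b' : B, bFolU π u2 σ P b' ≤ bFolU π u2 σ P b0 :=
      fun b' => hb0 b' (Finset.mem_univ b')
    refine csSup_le ⟨bLeadU π u1 σ P b0, b0, hb0', rfl⟩ ?_
    rintro y ⟨b, hb, rfl⟩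
    exact hub σ P hσ hP b hb
end
end
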